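/- arXiv:2506.04110 — 2 statements merged into one kernel-verified Lean document; each statement's English description precedes it below -/
import Mathlib

section
/- Let α be an irrational real number with continued fraction expansion [a_0; a_1, a_2, …] and convergents p_n/q_n, and let n ≥ 1. (i) If q_{n−1} is even, then the fraction p_{n−1}/(q_{n−1}/2) is a convergent of 2α. (ii) If q_{n−1} is odd and a_n ≥ 4, then the fraction 2p_{n−1}/q_{n−1} is a convergent of 2α. -/
open Filter

/-- Partial quotients of the continued fraction expansion: `cfA α n` is `a_n(α)`. -/
noncomputable def cfA : ℝ → ℕ → ℤ
  | α, 0 => ⌊α⌋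
  | α, n + 1 => cfA (Int.fract α)⁻¹ n

/-- `M(α) = sup_{n ≥ 1} a_n(α)` as an element of `ℕ∞`. -/
noncomputable def Mq (α : ℝ) : ℕ∞ := ⨆ n : ℕ, ((cfA α (n + 1)).toNat : ℕ∞)

/-- `B(α) = limsup_{n → ∞} a_n(α)` as an element of `ℕ∞`. -/
noncomputable def Bq (α : ℝ) : ℕ∞ := limsup (fun n => ((cfA α n).toNat : ℕ∞)) atTop

/-- Distance from a real number to the nearest integer. -/
noncomputable def nearestDist (x : ℝ) : ℝ := |x - round x|

/-- Complete quotients of the continued fraction expansion. -/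
noncomputable def cq (α : ℝ) : ℕ → ℝ
  | 0 => α
  | n + 1 => (Int.fract (cq α n))⁻¹

/-- Shifted convergent numerators: `cfP α (n+1) = p_n`, `cfP α 0 = p_{-1} = 1`. -/
noncomputable def cfP (α : ℝ) : ℕ → ℤ
  | 0 => 1
  | 1 => ⌊α⌋
  | n + 2 => cfA α (n + 1) * cfP α (n + 1) + cfP α n

/-- Shifted convergent denominators: `cfQ α (n+1) = q_n`, `cfQ α 0 = q_{-1} = 0`. -/
noncomputable def cfQ (α : ℝ) : ℕ → ℤ
  | 0 => 0
  | 1 => 1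
  | n + 2 => cfA α (n + 1) * cfQ α (n + 1) + cfQ α n

/-- Two reals are equivalent if related by an integer Möbius map of determinant `±1`. -/
def CfEquiv (x y : ℝ) : Prop :=
  ∃ a b c d : ℤ, (a * d - b * c = 1 ∨ a * d - b * c = -1) ∧
    y = ((a : ℝ) * x + b) / ((c : ℝ) * x + d)

section Aux
variable {α : ℝ}

lemma Irrational.fract' (h : Irrational α) : Irrational (Int.fract α) := by
  exact h.sub_intCast ⌊α⌋

lemma fract_pos' (h : Irrational α) : 0 < Int.fract α :=
  lt_of_le_of_ne (Int.fract_nonneg α) (fun he => h.fract'.ne_int 0 (by exact_mod_cast he.symm))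

lemma cq_succ (α : ℝ) (n : ℕ) : cq α (n + 1) = (Int.fract (cq α n))⁻¹ := rfl

lemma cq_shift (α : ℝ) (n : ℕ) : cq α (n + 1) = cq (Int.fract α)⁻¹ n := by
  induction n with
  | zero => rfl
  | succ n ih => rw [cq_succ, ih]; rfl

lemma irrational_cq (h : Irrational α) : ∀ n, Irrational (cq α n)
  | 0 => h
  | n + 1 => by rw [cq_succ]; exact ((irrational_cq h n).fract').inv

lemma cfA_eq_floor_cq : ∀ (α : ℝ) (n : ℕ), cfA α n = ⌊cq α n⌋
  | _, 0 => rfl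
  | α, n + 1 => by
      rw [show cfA α (n+1) = cfA (Int.fract α)⁻¹ n from rfl, cfA_eq_floor_cq, cq_shift]

lemma one_lt_cq (h : Irrational α) (n : ℕ) : 1 < cq α (n + 1) := by
  rw [cq_succ]
  have h1 := fract_pos' (irrational_cq h n)
  have h2 := Int.fract_lt_one (cq α n)
  rw [one_lt_inv_iff₀]
  exact ⟨h1, h2⟩

lemma one_le_cfA (h : Irrational α) (n : ℕ) : 1 ≤ cfA α (n + 1) := by
  rw [cfA_eq_floor_cq]
  exact Int.le_floor.2 (by exact_mod_cast (one_lt_cq h n).le)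

lemma cfQ_aux (h : Irrational α) : ∀ n, 0 ≤ cfQ α n ∧ 1 ≤ cfQ α (n + 1) := by
  intro n
  induction n with
  | zero => exact ⟨le_refl 0, le_refl 1⟩
  | succ n ih =>
    refine ⟨zero_le_one.trans ih.2, ?_⟩
    show 1 ≤ cfA α (n + 1) * cfQ α (n + 1) + cfQ α n
    nlinarith [one_le_cfA h n, ih.1, ih.2]

lemma cfQ_nonneg (h : Irrational α) (n : ℕ) : 0 ≤ cfQ α n := (cfQ_aux h n).1
lemma one_le_cfQ (h : Irrational α) (n : ℕ) : 1 ≤ cfQ α (n + 1) := (cfQ_aux h n).2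

lemma cfP_pos (h : Irrational α) (h1 : 1 ≤ α) : ∀ n, 1 ≤ cfP α n ∧ 1 ≤ cfP α (n + 1) := by
  intro n
  induction n with
  | zero => exact ⟨le_refl 1, Int.le_floor.2 (by exact_mod_cast h1)⟩
  | succ n ih =>
    refine ⟨ih.2, ?_⟩
    show 1 ≤ cfA α (n + 1) * cfP α (n + 1) + cfP α n
    nlinarith [one_le_cfA h n, ih.1, ih.2]

lemma cf_det (α : ℝ) : ∀ n, cfP α (n + 1) * cfQ α n - cfP α n * cfQ α (n + 1) = (-1) ^ (n + 1) := by
  intro n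
  induction n with
  | zero =>
    show ⌊α⌋ * 0 - 1 * 1 = (-1 : ℤ) ^ 1
    ring
  | succ n ih =>
    show (cfA α (n + 1) * cfP α (n + 1) + cfP α n) * cfQ α (n + 1)
        - cfP α (n + 1) * (cfA α (n + 1) * cfQ α (n + 1) + cfQ α n) = (-1) ^ (n + 2)
    rw [pow_succ (-1 : ℤ) (n + 1)]
    linear_combination (-1 : ℤ) * ih

lemma cf_key (h : Irrational α) :
    ∀ k, α * (cq α (k + 1) * cfQ α (k + 1) + cfQ α k) = cq α (k + 1) * cfP α (k + 1) + cfP α k := by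
  intro k
  induction k with
  | zero =>
    have hf : Int.fract α ≠ 0 := (fract_pos' h).ne'
    show α * ((Int.fract α)⁻¹ * (1 : ℤ) + (0 : ℤ)) = (Int.fract α)⁻¹ * (⌊α⌋ : ℤ) + (1 : ℤ)
    push_cast
    field_simp
    linear_combination (Int.floor_add_fract α).symm
  | succ k ih =>
    set x := cq α (k + 1) with hx
    have hfx : Int.fract x ≠ 0 := (fract_pos' (irrational_cq h (k + 1))).ne'
    have hy : cq α (k + 2) = (Int.fract x)⁻¹ := rfl
    have ha : (cfA α (k + 1) : ℝ) = (⌊x⌋ : ℤ) := by rw [cfA_eq_floor_cq]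
    have hxy : x * cq α (k + 2) = (cfA α (k + 1) : ℝ) * cq α (k + 2) + 1 := by
      have hfr : Int.fract x = x - (⌊x⌋ : ℝ) := rfl
      have hone : (x - (⌊x⌋ : ℝ)) * (Int.fract x)⁻¹ = 1 := by
        rw [← hfr]; exact mul_inv_cancel₀ hfx
      rw [hy, ha]
      linear_combination hone
    have hQ : (cfQ α (k + 2) : ℝ) = cfA α (k + 1) * cfQ α (k + 1) + cfQ α k := by
      push_cast [show cfQ α (k+2) = cfA α (k + 1) * cfQ α (k + 1) + cfQ α k from rfl]; ring
    have hP : (cfP α (k + 2) : ℝ) = cfA α (k + 1) * cfP α (k + 1) + cfP α k := by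
      push_cast [show cfP α (k+2) = cfA α (k + 1) * cfP α (k + 1) + cfP α k from rfl]; ring
    rw [hQ, hP]
    linear_combination cq α (k + 2) * ih - (α * (cfQ α (k + 1) : ℝ) - (cfP α (k + 1) : ℝ)) * hxy

end Aux

section Aux2
variable {α : ℝ}

lemma cf_approx (h : Irrational α) (k : ℕ) :
    (α * cfQ α (k + 1) - cfP α (k + 1)) * (cq α (k + 1) * cfQ α (k + 1) + cfQ α k)
      = (-1 : ℝ) ^ k := by
  have hkey := cf_key h k
  have hd : (cfP α (k + 1) : ℝ) * cfQ α k - cfP α k * cfQ α (k + 1) = (-1 : ℝ) ^ (k + 1) := by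
    exact_mod_cast congrArg (fun z : ℤ => (z : ℝ)) (cf_det α k)
  rw [pow_succ] at hd
  linear_combination (cfQ α (k + 1) : ℝ) * hkey - hd

lemma cf_shift (α : ℝ) :
    ∀ m, (cfP α (m + 1) = ⌊α⌋ * cfP (Int.fract α)⁻¹ m + cfQ (Int.fract α)⁻¹ m ∧
          cfQ α (m + 1) = cfP (Int.fract α)⁻¹ m) ∧
         (cfP α (m + 2) = ⌊α⌋ * cfP (Int.fract α)⁻¹ (m + 1) + cfQ (Int.fract α)⁻¹ (m + 1) ∧
          cfQ α (m + 2) = cfP (Int.fract α)⁻¹ (m + 1)) := by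
  set β := (Int.fract α)⁻¹ with hβ
  intro m
  induction m with
  | zero =>
    constructor
    · constructor
      · show ⌊α⌋ = ⌊α⌋ * 1 + 0; ring
      · rfl
    · constructor
      · show cfA α 1 * ⌊α⌋ + 1 = ⌊α⌋ * ⌊β⌋ + 1
        rw [show cfA α 1 = ⌊β⌋ from rfl]; ring
      · show cfA α 1 * 1 + 0 = ⌊β⌋
        rw [show cfA α 1 = ⌊β⌋ from rfl]; ring
  | succ m ih =>
    have hA : cfA α (m + 2) = cfA β (m + 1) := rfl
    refine ⟨ih.2, ?_, ?_⟩
    · show cfA α (m + 2) * cfP α (m + 2) + cfP α (m + 1)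
          = ⌊α⌋ * (cfA β (m + 1) * cfP β (m + 1) + cfP β m)
            + (cfA β (m + 1) * cfQ β (m + 1) + cfQ β m)
      rw [hA, ih.2.1, ih.1.1]; ring
    · show cfA α (m + 2) * cfQ α (m + 2) + cfQ α (m + 1)
          = cfA β (m + 1) * cfP β (m + 1) + cfP β m
      rw [hA, ih.2.2, ih.1.2]

lemma ratio_eq : ∀ (m : ℕ) (β : ℝ), Irrational β →
    (cfP β (m + 1) : ℝ) / (cfQ β (m + 1) : ℝ) = (Real.convergent β m : ℝ) := by
  intro m
  induction m with
  | zero =>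
    intro β hβ
    rw [Real.convergent_zero]
    show ((⌊β⌋ : ℤ) : ℝ) / ((1 : ℤ) : ℝ) = _
    push_cast
    simp
  | succ m ih =>
    intro β hβ
    have hβ' : Irrational (Int.fract β)⁻¹ := hβ.fract'.inv
    have h1β' : (1 : ℝ) ≤ (Int.fract β)⁻¹ := by
      have h1 := fract_pos' hβ
      have h2 := Int.fract_lt_one β
      have := one_lt_inv_iff₀.2 ⟨h1, h2⟩
      linarith
    have hP' : (1 : ℤ) ≤ cfP (Int.fract β)⁻¹ (m + 1) := (cfP_pos hβ' h1β' m).2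
    have hQ' : (1 : ℤ) ≤ cfQ (Int.fract β)⁻¹ (m + 1) := one_le_cfQ hβ' m
    have hPr : (0 : ℝ) < (cfP (Int.fract β)⁻¹ (m + 1) : ℝ) := by exact_mod_cast hP'
    have hQr : (0 : ℝ) < (cfQ (Int.fract β)⁻¹ (m + 1) : ℝ) := by exact_mod_cast hQ'
    have hT := (cf_shift β m).2
    rw [Real.convergent_succ, Rat.cast_add, Rat.cast_intCast, Rat.cast_inv,
      ← ih (Int.fract β)⁻¹ hβ', hT.1, hT.2]
    push_cast
    rw [inv_div, add_div, mul_div_assoc, div_self hPr.ne', mul_one]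
end Aux2

/-- For irrational `α` with convergents `p_n/q_n` (here `cfP α (n+1) = p_n` and
`cfQ α (n+1) = q_n`) and `n ≥ 1`: (i) if `q_{n-1}` is even then `p_{n-1}/(q_{n-1}/2)` is a
convergent of `2α`; (ii) if `q_{n-1}` is odd and `a_n ≥ 4` then `2p_{n-1}/q_{n-1}` is a
convergent of `2α`. -/
theorem stmt7 (α : ℝ) (hα : Irrational α) (n : ℕ) (hn : 1 ≤ n) :
    (Even (cfQ α n) →
      ∃ m : ℕ, ((cfP (2 * α) (m + 1) : ℝ) / (cfQ (2 * α) (m + 1) : ℝ)) =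
        (cfP α n : ℝ) / ((cfQ α n : ℝ) / 2)) ∧
    (Odd (cfQ α n) → 4 ≤ cfA α n →
      ∃ m : ℕ, ((cfP (2 * α) (m + 1) : ℝ) / (cfQ (2 * α) (m + 1) : ℝ)) =
        (2 * (cfP α n : ℝ)) / (cfQ α n : ℝ)) := by
  obtain ⟨k, rfl⟩ : ∃ k, n = k + 1 := ⟨n - 1, (Nat.succ_pred_eq_of_pos hn).symm⟩
  have h2 : Irrational (2 * α) := by
    have := hα.intCast_mul (m := 2) (by norm_num)
    simpa using this
  set P := cfP α (k + 1) with hPdef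
  set Q := cfQ α (k + 1) with hQdef
  have hQ1 : (1 : ℤ) ≤ Q := one_le_cfQ hα k
  have hQ0 : (0 : ℤ) ≤ cfQ α k := cfQ_nonneg hα k
  have hA1 : (1 : ℤ) ≤ cfA α (k + 1) := one_le_cfA hα k
  have hQ2 : cfQ α (k + 2) = cfA α (k + 1) * Q + cfQ α k := rfl
  have hsq : ((-1 : ℤ) ^ (k + 1)) * ((-1 : ℤ) ^ (k + 1)) = 1 := by
    rw [← pow_add]
    exact Even.neg_one_pow ⟨k + 1, by ring⟩
  have hcop : IsCoprime P Q := ⟨(-1) ^ (k + 1) * cfQ α k, -((-1) ^ (k + 1) * cfP α k), by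
    linear_combination ((-1 : ℤ) ^ (k + 1)) * cf_det α k + hsq⟩
  set x := cq α (k + 1) with hx
  set D : ℝ := x * Q + cfQ α k with hD
  have hkey : (α * Q - P) * D = (-1 : ℝ) ^ k := cf_approx hα k
  have hxgt : (cfA α (k + 1) : ℝ) < x := by
    rw [cfA_eq_floor_cq]
    exact (Int.floor_le x).lt_of_ne fun h' => (irrational_cq hα (k + 1)).ne_int ⌊x⌋ h'.symm
  have hQr : (1 : ℝ) ≤ (Q : ℝ) := by exact_mod_cast hQ1
  have hQpos : (0 : ℝ) < (Q : ℝ) := by linarith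
  have hQkr : (0 : ℝ) ≤ (cfQ α k : ℝ) := by exact_mod_cast hQ0
  have hQ2c : (cfQ α (k + 2) : ℝ) = (cfA α (k + 1) : ℝ) * Q + cfQ α k := by
    rw [hQ2]; push_cast; ring
  have hDgt : (cfQ α (k + 2) : ℝ) < D := by
    rw [hQ2c, hD]
    nlinarith [hxgt, hQr]
  have hQ2ge : (Q : ℝ) ≤ (cfQ α (k + 2) : ℝ) := by
    rw [hQ2c]
    have hA1r : (1 : ℝ) ≤ (cfA α (k + 1) : ℝ) := by exact_mod_cast hA1
    nlinarith
  have hDpos : (0 : ℝ) < D := by linarith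
  have habs : |α * Q - P| = 1 / D := by
    have h1 : |(α * Q - P) * D| = 1 := by rw [hkey]; simp [abs_pow]
    rw [abs_mul, abs_of_pos hDpos] at h1
    field_simp
    linarith [h1]
  constructor
  · -- part (i): Q even
    intro hEven
    obtain ⟨c, hc⟩ := hEven
    have hc2 : Q = 2 * c := by linarith
    have hc1 : (1 : ℤ) ≤ c := by omega
    have hcr : (0 : ℝ) < (c : ℝ) := by exact_mod_cast hc1.trans_lt' (by norm_num)
    have hQc : (Q : ℝ) = 2 * (c : ℝ) := by exact_mod_cast hc2
    have hcopc : IsCoprime P c :=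
      hcop.of_isCoprime_of_dvd_right ⟨2, by linarith⟩
    set q : ℚ := (P : ℚ) / (c : ℚ) with hq
    have hcpn : Nat.Coprime P.natAbs c.natAbs := Int.isCoprime_iff_gcd_eq_one.mp hcopc
    have hden : (q.den : ℤ) = c := Rat.den_div_eq_of_coprime (by omega) hcpn
    have hdenr : (q.den : ℝ) = (c : ℝ) := by exact_mod_cast hden
    have hqr : (q : ℝ) = (P : ℝ) / (c : ℝ) := by rw [hq]; push_cast; ring
    have he : 2 * α - (q : ℝ) = 2 * (α * Q - P) / Q := by
      rw [hqr]
      field_simp [hQc]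
      rw [hQc]; ring
    have hineq : |2 * α - (q : ℝ)| < 1 / (2 * (q.den : ℝ) ^ 2) := by
      have habs2 : |2 * α - (q : ℝ)| = 2 / (D * Q) := by
        rw [he, abs_div, abs_of_pos hQpos, abs_mul, abs_two, habs, mul_one_div, div_div]
      rw [habs2, hdenr, div_lt_div_iff₀ (by positivity) (by positivity)]
      nlinarith [mul_lt_mul_of_pos_right (lt_of_le_of_lt hQ2ge hDgt) hQpos]
    obtain ⟨m, hm⟩ := Real.exists_rat_eq_convergent hineq
    refine ⟨m, ?_⟩
    rw [ratio_eq m (2 * α) h2, ← hm, hqr, hQc]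
    norm_num
  · -- part (ii): Q odd, a ≥ 4
    intro hOdd hA4
    obtain ⟨t, ht⟩ := hOdd
    have hcop2 : IsCoprime (2 * P : ℤ) Q := by
      refine IsCoprime.mul_left ⟨-t, 1, by linarith⟩ hcop
    set q : ℚ := ((2 * P : ℤ) : ℚ) / (Q : ℚ) with hq
    have hcpn : Nat.Coprime (2 * P : ℤ).natAbs Q.natAbs := Int.isCoprime_iff_gcd_eq_one.mp hcop2
    have hden : (q.den : ℤ) = Q := Rat.den_div_eq_of_coprime (by omega) hcpn
    have hdenr : (q.den : ℝ) = (Q : ℝ) := by exact_mod_cast hden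
    have hqr : (q : ℝ) = 2 * (P : ℝ) / (Q : ℝ) := by rw [hq]; push_cast; ring
    have he : 2 * α - (q : ℝ) = 2 * (α * Q - P) / Q := by
      rw [hqr]
      field_simp
    have hA4r : (4 : ℝ) ≤ (cfA α (k + 1) : ℝ) := by exact_mod_cast hA4
    have hD4 : 4 * (Q : ℝ) < D := by
      rw [hQ2c] at hDgt
      nlinarith
    have hineq : |2 * α - (q : ℝ)| < 1 / (2 * (q.den : ℝ) ^ 2) := by
      have habs2 : |2 * α - (q : ℝ)| = 2 / (D * Q) := by
        rw [he, abs_div, abs_of_pos hQpos, abs_mul, abs_two, habs, mul_one_div, div_div]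
      rw [habs2, hdenr, div_lt_div_iff₀ (by positivity) (by positivity)]
      nlinarith [mul_lt_mul_of_pos_right hD4 hQpos]
    obtain ⟨m, hm⟩ := Real.exists_rat_eq_convergent hineq
    refine ⟨m, ?_⟩
    rw [ratio_eq m (2 * α) h2, ← hm, hqr]
end

section
/- Let α be a quadratic irrational such that α is equivalent to α/2 and equivalent to (α+1)/2. Then for every integer K ≥ 0 there exists a real irrational β such that β, 2β, 4β, …, 2^K β are all equivalent to α. -/
open Filter

lemma denom_ne {a b c d : ℤ} (hdet : a * d - b * c = 1 ∨ a * d - b * c = -1)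
    {x : ℝ} (hx : Irrational x) : (c : ℝ) * x + d ≠ 0 := by
  rcases eq_or_ne c 0 with hc | hc
  · subst hc
    have hd : d ≠ 0 := by rintro rfl; simp at hdet
    simpa using hd
  · intro h
    have : x = ((-d : ℚ) / (c : ℚ) : ℚ) := by
      have hc' : (c : ℝ) ≠ 0 := Int.cast_ne_zero.mpr hc
      push_cast
      field_simp
      linarith
    exact hx ⟨_, this.symm⟩

lemma cfequiv_irrational {x y : ℝ} (hx : Irrational x) (h : CfEquiv x y) : Irrational y := by
  obtain ⟨a, b, c, d, hdet, hy⟩ := h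
  have hD : (c : ℝ) * x + d ≠ 0 := denom_ne hdet hx
  rintro ⟨q, hq⟩
  have key : ((a : ℝ) - q * c) * x = q * d - b := by
    have : (q : ℝ) * ((c : ℝ) * x + d) = (a : ℝ) * x + b := by
      rw [hy, eq_div_iff hD] at hq; linarith [hq]
    ring_nf
    ring_nf at this
    linarith
  rcases eq_or_ne ((a : ℚ) - q * c) 0 with h0 | h0
  · have h0' : (a : ℝ) - q * c = 0 := by exact_mod_cast h0
    have h1' : (q : ℝ) * d - b = 0 := by
      rw [h0', zero_mul] at key; linarith
    have hqc : (q : ℚ) * c = a := by linarith [h0]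
    have hqd : (q : ℚ) * d = b := by
      have h3 : ((q * (d : ℚ) - b : ℚ) : ℝ) = 0 := by push_cast; linarith
      have h4 : (q * (d : ℚ) - b : ℚ) = 0 := by exact_mod_cast h3
      linarith
    have : (a : ℚ) * d - b * c = 0 := by
      rw [← hqc, ← hqd]; ring
    rcases hdet with hd | hd <;> rw_mod_cast [hd] at this <;> norm_num at this
  · apply hx
    refine ⟨(q * d - b) / ((a : ℚ) - q * c), ?_⟩
    have h0r : ((a : ℝ) - q * c) ≠ 0 := by exact_mod_cast h0
    push_cast
    field_simp
    linarith [key]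

lemma cfequiv_symm {x y : ℝ} (hx : Irrational x) (h : CfEquiv x y) : CfEquiv y x := by
  obtain ⟨a, b, c, d, hdet, hy⟩ := h
  have hD : (c : ℝ) * x + d ≠ 0 := denom_ne hdet hx
  refine ⟨d, -b, -c, a, ?_, ?_⟩
  · rcases hdet with hd | hd
    · left; linarith
    · right; linarith
  · have hdet' : (a : ℝ) * d - b * c ≠ 0 := by
      rcases hdet with hd | hd <;> · push_cast [show ((a*d - b*c : ℤ) : ℝ) = a*d - b*c from by push_cast; ring] at *; rw [show ((a:ℝ)*d - b*c) = ((a*d - b*c : ℤ):ℝ) by push_cast; ring, hd]; norm_num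
    have hden2 : ((-c : ℤ) : ℝ) * y + a ≠ 0 := by
      rw [hy]
      rw [show ((-c : ℤ) : ℝ) * (((a : ℝ) * x + b) / ((c : ℝ) * x + d)) + a
          = ((a : ℝ) * d - b * c) / ((c : ℝ) * x + d) by push_cast; field_simp; ring]
      exact div_ne_zero hdet' hD
    rw [hy]
    rw [eq_div_iff (by rw [← hy]; exact hden2)]
    push_cast
    linear_combination (-1 : ℝ) * div_mul_cancel₀ ((a : ℝ) * x + b) hD





lemma cfequiv_trans {x y z : ℝ} (hx : Irrational x) (hxy : CfEquiv x y)
    (hyz : CfEquiv y z) : CfEquiv x z := by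
  obtain ⟨a, b, c, d, hdet1, hy⟩ := hxy
  obtain ⟨e, f, g, h, hdet2, hz⟩ := hyz
  have hy' : Irrational y := cfequiv_irrational hx ⟨a, b, c, d, hdet1, hy⟩
  have hD : (c : ℝ) * x + d ≠ 0 := denom_ne hdet1 hx
  have hG : (g : ℝ) * y + h ≠ 0 := denom_ne hdet2 hy'
  refine ⟨e * a + f * c, e * b + f * d, g * a + h * c, g * b + h * d, ?_, ?_⟩
  · have : (e * a + f * c) * (g * b + h * d) - (e * b + f * d) * (g * a + h * c)
        = (e * h - f * g) * (a * d - b * c) := by ring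
    rcases hdet1 with h1 | h1 <;> rcases hdet2 with h2 | h2 <;>
      [left; right; right; left] <;> rw [this, h1, h2] <;> ring
  · have hQ : ((g * a + h * c : ℤ) : ℝ) * x + ((g * b + h * d : ℤ) : ℝ) ≠ 0 := by
      have heq : ((g * a + h * c : ℤ) : ℝ) * x + ((g * b + h * d : ℤ) : ℝ)
          = ((g : ℝ) * y + h) * ((c : ℝ) * x + d) := by
        rw [hy]; push_cast; field_simp; ring
      rw [heq]
      exact mul_ne_zero hG hD
    have hG' : (g : ℝ) * (((a : ℝ) * x + b) / ((c : ℝ) * x + d)) + h ≠ 0 := by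
      rw [← hy]; exact hG
    rw [hz, hy]
    rw [div_eq_div_iff hG' hQ]
    push_cast
    linear_combination ((e : ℝ) * h - f * g) * div_mul_cancel₀ ((a : ℝ) * x + b) hD

/-- If `x = (aα+b)/(cα+d)` with `a` odd and det ±1, then `x/2 ∼ α`. -/
lemma half_equiv {α : ℝ} (hirr : Irrational α) (h1 : CfEquiv α (α / 2))
    (h2 : CfEquiv α ((α + 1) / 2)) {a b c d : ℤ}
    (hdet : a * d - b * c = 1 ∨ a * d - b * c = -1) (ha : Odd a) {x : ℝ}
    (hx : x = ((a : ℝ) * α + b) / ((c : ℝ) * α + d)) : CfEquiv α (x / 2) := by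
  have hD : (c : ℝ) * α + d ≠ 0 := denom_ne hdet hirr
  rcases Int.even_or_odd b with hb | hb
  · obtain ⟨m, hm⟩ := hb
    refine cfequiv_trans hirr h1 ⟨a, m, 2 * c, d, ?_, ?_⟩
    · have h' : a * d - m * (2 * c) = a * d - b * c := by rw [hm]; ring
      rw [h']; exact hdet
    · have hm' : (b : ℝ) = m + m := by exact_mod_cast hm
      have hD2 : ((2 * c : ℤ) : ℝ) * (α / 2) + d ≠ 0 := by
        push_cast
        rw [show (2 : ℝ) * c * (α / 2) + d = (c : ℝ) * α + d by ring]; exact hD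
      rw [hx, div_div, div_eq_div_iff (mul_ne_zero hD two_ne_zero) hD2]
      push_cast
      linear_combination ((c : ℝ) * α + d) * hm'
  · obtain ⟨n, hn⟩ := ha
    obtain ⟨p, hp⟩ := hb
    refine cfequiv_trans hirr h2 ⟨a, p - n, 2 * c, d - c, ?_, ?_⟩
    · have h' : a * (d - c) - (p - n) * (2 * c) = a * d - b * c := by
        rw [hp, hn]; ring
      rw [h']; exact hdet
    · have hb' : (b : ℝ) = a + 2 * ((p : ℝ) - n) := by
        have e1 : (b : ℝ) = 2 * p + 1 := by exact_mod_cast hp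
        have e2 : (a : ℝ) = 2 * n + 1 := by exact_mod_cast hn
        rw [e1, e2]; ring
      have hD2 : ((2 * c : ℤ) : ℝ) * ((α + 1) / 2) + ((d - c : ℤ) : ℝ) ≠ 0 := by
        push_cast
        rw [show (2 : ℝ) * c * ((α + 1) / 2) + ((d : ℝ) - c) = (c : ℝ) * α + d by ring]
        exact hD
      rw [hx, div_div, div_eq_div_iff (mul_ne_zero hD two_ne_zero) hD2]
      push_cast
      linear_combination ((c : ℝ) * α + d) * hb'

lemma step_equiv {α x : ℝ} (hirr : Irrational α) (h1 : CfEquiv α (α / 2))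
    (h2 : CfEquiv α ((α + 1) / 2)) (hx : CfEquiv α x) :
    CfEquiv α (x / 2) ∨ CfEquiv α ((x + 1) / 2) := by
  obtain ⟨a, b, c, d, hdet, hxe⟩ := hx
  have hD : (c : ℝ) * α + d ≠ 0 := denom_ne hdet hirr
  rcases Int.even_or_odd a with ha | ha
  · -- a even, so c odd, a + c odd; use (x+1)/2
    have hc : Odd c := by
      rcases Int.even_or_odd c with hc | hc
      · exfalso
        obtain ⟨u, hu⟩ := ha; obtain ⟨v, hv⟩ := hc
        have h2d : (2 : ℤ) ∣ (a * d - b * c) := ⟨u * d - b * v, by rw [hu, hv]; ring⟩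
        rcases hdet with h' | h' <;> rw [h'] at h2d <;> omega
      · exact hc
    have hac : Odd (a + c) := by
      obtain ⟨u, hu⟩ := ha; obtain ⟨v, hv⟩ := hc
      exact ⟨u + v, by omega⟩
    right
    refine half_equiv hirr h1 h2 (a := a + c) (b := b + d) (c := c) (d := d) ?_ hac ?_
    · have h' : (a + c) * d - (b + d) * c = a * d - b * c := by ring
      rw [h']; exact hdet
    · rw [hxe]
      push_cast
      rw [div_add_one hD]
      ring
  · left
    exact half_equiv hirr h1 h2 hdet ha hxe

/-- If a quadratic irrational `α` satisfies `α ∼ α/2 ∼ (α+1)/2`, then for every `K ≥ 0`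
there exists an irrational `β` such that `β, 2β, 4β, …, 2^K β` are all equivalent to `α`. -/
theorem stmt10 (α : ℝ) (hirr : Irrational α)
    (hquad : ∃ A B C : ℤ, A ≠ 0 ∧ (A : ℝ) * α ^ 2 + (B : ℝ) * α + (C : ℝ) = 0)
    (h1 : CfEquiv α (α / 2)) (h2 : CfEquiv α ((α + 1) / 2)) :
    ∀ K : ℕ, ∃ β : ℝ, Irrational β ∧ ∀ k ≤ K, CfEquiv ((2 : ℝ) ^ k * β) α := by
  intro K
  induction K with
  | zero =>
    refine ⟨α, hirr, fun k hk => ?_⟩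
    interval_cases k
    exact ⟨1, 0, 0, 1, Or.inl (by norm_num), by norm_num⟩
  | succ K ih =>
    obtain ⟨β, hβirr, hβ⟩ := ih
    have hβα : CfEquiv β α := by simpa using hβ 0 (Nat.zero_le _)
    have hαβ : CfEquiv α β := cfequiv_symm hβirr hβα
    rcases step_equiv hirr h1 h2 hαβ with h | h
    · refine ⟨β / 2, cfequiv_irrational hirr h, fun k hk => ?_⟩
      cases k with
      | zero => simpa using cfequiv_symm hirr h
      | succ j =>
        have hj : j ≤ K := by omega
        have heq : (2 : ℝ) ^ (j + 1) * (β / 2) = 2 ^ j * β := by rw [pow_succ]; ring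
        rw [heq]; exact hβ j hj
    · refine ⟨(β + 1) / 2, cfequiv_irrational hirr h, fun k hk => ?_⟩
      cases k with
      | zero => simpa using cfequiv_symm hirr h
      | succ j =>
        have hj : j ≤ K := by omega
        have heq : (2 : ℝ) ^ (j + 1) * ((β + 1) / 2) = 2 ^ j * β + 2 ^ j := by
          rw [pow_succ]; ring
        rw [heq]
        have hT : CfEquiv ((2 : ℝ) ^ j * β + 2 ^ j) ((2 : ℝ) ^ j * β) :=
          ⟨1, -(2 ^ j), 0, 1, Or.inl (by ring), by push_cast; ring⟩
        have hIrr : Irrational ((2 : ℝ) ^ j * β + 2 ^ j) := by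
          have i1 : Irrational (((2 ^ j : ℤ) : ℝ) * β) := hβirr.intCast_mul (by positivity)
          have i2 := i1.add_intCast (2 ^ j)
          push_cast at i2
          exact i2
        exact cfequiv_trans hIrr hT (hβ j hj)
end
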